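/- If C* restricted to Im M (= (ker M)^⊥) is equipped with the inner product ⟨u,v⟩_M = ⟨Mu,v⟩, then C*|_{Im M} : Im M → D is an isometric isomorphism, where M = C C* is a closed-range positive semi-definite operator decomposition with C injective and C* surjective. -/

import Mathlib

/-- `C*` restricted to `Im M`, with `Im M` endowed with the `M`-inner product, is an
isometric isomorphism onto `D`: it maps `Im M` bijectively onto `D` and satisfies
`‖C* u‖² = ⟨M u, u⟩` for all `u`. -/
theorem stmt13 {H D : Type} [NormedAddCommGroup H] [InnerProductSpace ℝ H] [CompleteSpace H]
    [NormedAddCommGroup D] [InnerProductSpace ℝ D] [CompleteSpace D]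
    (M : H →L[ℝ] H) (C : D →L[ℝ] H)
    (hMsa : ∀ x y : H, (inner ℝ (M x) y : ℝ) = inner ℝ x (M y))
    (hMpos : ∀ x : H, 0 ≤ (inner ℝ (M x) x : ℝ))
    (hMclosed : IsClosed (Set.range M))
    (hC : Function.Injective C)
    (hCsurj : Function.Surjective (ContinuousLinearMap.adjoint C))
    (hM : M = C ∘L (ContinuousLinearMap.adjoint C)) :
    Set.BijOn (ContinuousLinearMap.adjoint C) (Set.range M) Set.univ ∧
    (∀ u v : H, (inner ℝ ((ContinuousLinearMap.adjoint C) u)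
        ((ContinuousLinearMap.adjoint C) v) : ℝ) = (inner ℝ (M u) v : ℝ)) := by
  set Cs := ContinuousLinearMap.adjoint C with hCs
  have hinner : ∀ u v : H, (inner ℝ (Cs u) (Cs v) : ℝ) = inner ℝ (M u) v := by
    intro u v
    rw [hM]
    exact ContinuousLinearMap.adjoint_inner_right C (Cs u) v
  -- if Cs x = 0 then M x = 0
  have hker : ∀ x : H, Cs x = 0 → M x = 0 := by
    intro x hx
    rw [hM]
    simp [ContinuousLinearMap.comp_apply, ← hCs, hx]
  -- ker M ⟂ range M
  have horth : ∀ x y : H, M x = 0 → (inner ℝ (M y) x : ℝ) = 0 := by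
    intro x y hx
    rw [hMsa, hx, inner_zero_right]
  constructor
  · refine ⟨fun x _ => trivial, ?_, ?_⟩
    · intro u hu v hv huv
      have hMd : M (u - v) = 0 := hker _ (by simp [huv])
      obtain ⟨a, ha⟩ := hu
      obtain ⟨b, hb⟩ := hv
      have : (inner ℝ (u - v) (u - v) : ℝ) = 0 := by
        have : u - v = M (a - b) := by simp [map_sub, ha, hb]
        rw [this]
        exact horth _ _ (by rw [← this, hMd])
      exact sub_eq_zero.mp (inner_self_eq_zero.mp this)
    · intro d _
      obtain ⟨x, hx⟩ := hCsurj d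
      -- decompose x along the closed subspace range M
      set K : Submodule ℝ H := LinearMap.range (M : H →ₗ[ℝ] H) with hKdef
      have hKclosed : IsClosed (K : Set H) := hMclosed
      haveI : CompleteSpace K := hKclosed.completeSpace_coe
      haveI : Submodule.HasOrthogonalProjection K := Submodule.HasOrthogonalProjection.ofCompleteSpace K
      obtain ⟨p, hp, q, hq, hpq⟩ := K.exists_add_mem_mem_orthogonal x
      refine ⟨p, hp, ?_⟩
      have hCq : Cs q = 0 := by
        have h0 : (inner ℝ (Cs q) (Cs q) : ℝ) = 0 := by
          rw [hinner]
          exact hq (M q) ⟨q, rfl⟩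
        exact inner_self_eq_zero.mp h0
      rw [← hx, hpq, map_add, hCq, add_zero]
  · exact hinner
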